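/- For ω ∈ [0, π] and integer s ≥ 0 let E_{n,s}(ω) be the n×2 matrix with j-th row (j^s cos(jω), j^s sin(jω)). Let L be a linear subspace of R^n with dim(L) < n. Then the set {s ∈ N ∪ {0} : span(E_{n,s}(ω)) ⊄ L} is nonempty; that is, the quantity ρ(ω, L) = min{s ≥ 0 : span(E_{n,s}(ω)) ⊄ L} is well defined. -/

import Mathlib

open Matrix

/-- The `n × 2` matrix `E_{n,s}(ω)` with `j`-th row `(j^s cos(jω), j^s sin(jω))`, `j = 1,…,n`. -/
noncomputable def Ens (n s : ℕ) (ω : ℝ) : Matrix (Fin n) (Fin 2) ℝ :=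
  fun j i =>
    if i = 0 then ((j.val + 1 : ℕ) : ℝ) ^ s * Real.cos (((j.val + 1 : ℕ) : ℝ) * ω)
    else ((j.val + 1 : ℕ) : ℝ) ^ s * Real.sin (((j.val + 1 : ℕ) : ℝ) * ω)

theorem stmt_14 {n : ℕ} (L : Submodule ℝ (Fin n → ℝ)) (hL : Module.finrank ℝ L < n)
    (ω : ℝ) (hω : ω ∈ Set.Icc 0 Real.pi) :
    {s : ℕ | ¬ LinearMap.range (Ens n s ω).mulVecLin ≤ L}.Nonempty := by
  by_contra h
  rw [Set.not_nonempty_iff_eq_empty, Set.eq_empty_iff_forall_notMem] at h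
  simp only [Set.mem_setOf_eq, not_not] at h
  -- L is a proper subspace
  have hlt : L < ⊤ := by
    rcases lt_or_eq_of_le (le_top (a := L)) with h' | h'
    · exact h'
    · exfalso
      rw [h'] at hL
      rw [finrank_top, Module.finrank_fin_fun] at hL
      exact lt_irrefl _ hL
  obtain ⟨φ, hφne, hφbot⟩ := Submodule.exists_dual_map_eq_bot_of_lt_top hlt inferInstance
  have hφL : ∀ x ∈ L, φ x = 0 := by
    intro x hx
    have : φ x ∈ L.map φ := ⟨x, hx, rfl⟩
    rwa [hφbot, Submodule.mem_bot] at this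
  set f : Fin n → ℝ := fun j => φ (fun k => if j = k then 1 else 0) with hf
  -- the columns of each `Ens n s ω` lie in `L`
  have hcol : ∀ (s : ℕ) (i : Fin 2), (fun j => Ens n s ω j i) ∈ L := by
    intro s i
    have hmem : (Ens n s ω).mulVecLin (Pi.single i 1) ∈ L :=
      h s (LinearMap.mem_range_self _ (Pi.single i 1))
    simp [Matrix.mulVecLin_apply, Matrix.mulVec_single] at hmem
    exact hmem
  have hsum : ∀ (s : ℕ) (i : Fin 2), ∑ j, Ens n s ω j i * f j = 0 := by
    intro s i
    have := hφL _ (hcol s i)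
    rw [LinearMap.pi_apply_eq_sum_univ] at this
    simpa [smul_eq_mul] using this
  set c : Fin n → ℂ := fun j =>
    (f j : ℂ) * Complex.exp ((((j.val + 1 : ℕ) : ℝ) * ω : ℝ) * Complex.I) with hc
  have key : ∀ s : ℕ, ∑ j, c j * ((j.val + 1 : ℕ) : ℂ) ^ s = 0 := by
    intro s
    have hterm : ∀ j : Fin n, c j * ((j.val + 1 : ℕ) : ℂ) ^ s =
        ((Ens n s ω j 0 * f j : ℝ) : ℂ) + ((Ens n s ω j 1 * f j : ℝ) : ℂ) * Complex.I := by
      intro j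
      rw [hc]
      simp only [Ens]
      rw [Complex.exp_mul_I, ← Complex.ofReal_cos, ← Complex.ofReal_sin]
      norm_num
      push_cast
      ring
    calc ∑ j, c j * ((j.val + 1 : ℕ) : ℂ) ^ s
        = ∑ j, (((Ens n s ω j 0 * f j : ℝ) : ℂ) + ((Ens n s ω j 1 * f j : ℝ) : ℂ) * Complex.I) :=
          Finset.sum_congr rfl (fun j _ => hterm j)
      _ = ((∑ j, Ens n s ω j 0 * f j : ℝ) : ℂ) + ((∑ j, Ens n s ω j 1 * f j : ℝ) : ℂ) * Complex.I := by
          rw [Finset.sum_add_distrib, ← Finset.sum_mul]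
          push_cast
          ring
      _ = 0 := by rw [hsum s 0, hsum s 1]; simp
  -- Vandermonde argument
  set v : Fin n → ℂ := fun j => ((j.val + 1 : ℕ) : ℂ) with hv
  have hdet : (Matrix.vandermonde v).det ≠ 0 := by
    rw [Matrix.det_vandermonde_ne_zero_iff]
    intro a b hab
    simp only [hv] at hab
    have : (a.val + 1 : ℕ) = (b.val + 1 : ℕ) := by exact_mod_cast hab
    exact Fin.ext (by omega)
  have hvm : c ᵥ* Matrix.vandermonde v = 0 := by
    funext s
    simpa [Matrix.vecMul, Matrix.vandermonde, dotProduct, hv] using key s.val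
  have hc0 : c = 0 := by
    have h2 := congrArg (· ᵥ* (Matrix.vandermonde v)⁻¹) hvm
    simpa [Matrix.vecMul_vecMul, Matrix.mul_nonsing_inv _ (isUnit_iff_ne_zero.mpr hdet)]
      using h2
  have hf0 : ∀ j, f j = 0 := by
    intro j
    have := congrFun hc0 j
    rw [hc] at this
    simp only [Pi.zero_apply, mul_eq_zero] at this
    rcases this with h' | h'
    · exact_mod_cast h'
    · exact absurd h' (Complex.exp_ne_zero _)
  apply hφne
  apply LinearMap.ext
  intro x
  rw [LinearMap.pi_apply_eq_sum_univ φ x]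
  simp only [LinearMap.zero_apply]
  refine Finset.sum_eq_zero fun j _ => ?_
  rw [show φ (fun k => if j = k then 1 else 0) = f j from rfl, hf0 j, smul_zero]
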